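/- (Fekete-type implication) If all solid minors of an n×n real matrix are positive, then the matrix is totally positive. -/

import Mathlib

namespace Fekete
open Matrix

/-- span of an index tuple -/
def sp {n : ℕ} : {k : ℕ} → (Fin k → Fin n) → ℕ
  | 0, _ => 0
  | _+1, r => (r (Fin.last _)).val - (r 0).val

@[simp] lemma sp_succ {n k : ℕ} (r : Fin (k+1) → Fin n) :
    sp r = (r (Fin.last k)).val - (r 0).val := rfl

lemma sm_nat {n k : ℕ} {r : Fin k → Fin n} (hr : StrictMono r) (i j : Fin k)
    (hij : (i : ℕ) ≤ (j : ℕ)) : (r i : ℕ) + ((j : ℕ) - (i : ℕ)) ≤ (r j : ℕ) := by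
  obtain ⟨d, hd⟩ : ∃ d, (j : ℕ) = (i : ℕ) + d := ⟨(j : ℕ) - (i : ℕ), by omega⟩
  clear hij
  induction d generalizing j with
  | zero =>
    have hij' : i = j := Fin.ext (by omega)
    subst hij'; omega
  | succ d ih =>
    have hlt : (i : ℕ) + d < k := by have := j.isLt; omega
    have h1 := ih ⟨(i : ℕ) + d, hlt⟩ rfl
    have h2 : r ⟨(i : ℕ) + d, hlt⟩ < r j := hr (by rw [Fin.lt_def]; simp; omega)
    rw [Fin.lt_def] at h2
    simp at h1
    omega

lemma exists_gap {n k : ℕ} {r : Fin (k+1) → Fin n} (hr : StrictMono r)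
    (h : (r 0 : ℕ) + k + 1 ≤ (r (Fin.last k) : ℕ)) :
    ∃ i : Fin k, (r i.castSucc : ℕ) + 2 ≤ (r i.succ : ℕ) := by
  by_contra hcon
  push_neg at hcon
  have H : ∀ j : Fin (k+1), (r j : ℕ) ≤ (r 0 : ℕ) + (j : ℕ) := by
    intro j
    induction j using Fin.induction with
    | zero => simp
    | succ i ih =>
      have := hcon i
      simp only [Fin.val_succ, Fin.coe_castSucc] at *
      omega
  have := H (Fin.last k)
  simp [Fin.val_last] at this
  omega

lemma det_updateRow_sum' {N : Type*} [DecidableEq N] [Fintype N] (B : Matrix N N ℝ) (i : N)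
    {ι : Type*} (s : Finset ι) (v : ι → N → ℝ) :
    (B.updateRow i (∑ t ∈ s, v t)).det = ∑ t ∈ s, (B.updateRow i (v t)).det := by
  classical
  induction s using Finset.induction_on with
  | empty =>
    simp only [Finset.sum_empty]
    exact Matrix.det_eq_zero_of_row_eq_zero i (fun j => by simp)
  | insert _ _ hk ih =>
    rw [Finset.sum_insert hk, Matrix.det_updateRow_add, ih, Finset.sum_insert hk]

lemma ld {n k : ℕ} (y : Matrix (Fin n) (Fin n) ℝ) (r' : Fin (k+1) → Fin n)
    (c : Fin k → Fin n) (j : Fin k) :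
    ∑ t : Fin (k+1), (-1:ℝ)^(t:ℕ) * (y.submatrix (fun i => r' (t.succAbove i)) c).det
      * y (r' t) (c j) = 0 := by
  have h0 : (Matrix.of fun i t => (Fin.cons (y (r' i) (c j)) (fun l => y (r' i) (c l)) : Fin (k+1) → ℝ) t :
      Matrix (Fin (k+1)) (Fin (k+1)) ℝ).det = 0 := by
    apply Matrix.det_zero_of_column_eq (show (0 : Fin (k+1)) ≠ j.succ from (Fin.succ_ne_zero j).symm)
    intro i; simp
  rw [Matrix.det_succ_column_zero] at h0
  rw [← h0]
  apply Finset.sum_congr rfl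
  intro t _
  have hm : ((Matrix.of fun i t' => (Fin.cons (y (r' i) (c j)) (fun l => y (r' i) (c l)) : Fin (k+1) → ℝ) t' :
      Matrix (Fin (k+1)) (Fin (k+1)) ℝ).submatrix t.succAbove Fin.succ)
      = y.submatrix (fun i => r' (t.succAbove i)) c := by
    ext i l; simp [Matrix.submatrix_apply]
  rw [hm]
  simp only [Matrix.of_apply, Fin.cons_zero]
  ring

lemma strictMono_cons {n M : ℕ} {z : Fin n} {u : Fin M → Fin n} (hu : StrictMono u)
    (hz : ∀ i, z < u i) : StrictMono (Fin.cons z u : Fin (M+1) → Fin n) := by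
  intro i j hij
  induction j using Fin.cases with
  | zero => exact absurd hij (Fin.not_lt_zero i)
  | succ j =>
    induction i using Fin.cases with
    | zero => simpa using hz j
    | succ i =>
      simp only [Fin.cons_succ]
      exact hu (by exact Fin.succ_lt_succ_iff.mp hij)

lemma strictMono_snoc {n M : ℕ} {z : Fin n} {u : Fin M → Fin n} (hu : StrictMono u)
    (hz : ∀ i, u i < z) : StrictMono (Fin.snoc u z : Fin (M+1) → Fin n) := by
  intro i j hij
  induction j using Fin.lastCases with
  | last =>
    induction i using Fin.lastCases with
    | last => exact absurd hij (lt_irrefl _)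
    | cast i => simp only [Fin.snoc_castSucc, Fin.snoc_last]; exact hz i
  | cast j =>
    induction i using Fin.lastCases with
    | last => exact absurd hij (not_lt.mpr (Fin.le_last _))
    | cast i =>
      simp only [Fin.snoc_castSucc]
      exact hu (Fin.castSucc_lt_castSucc_iff.mp hij)

lemma det_cons {n M : ℕ} (y : Matrix (Fin n) (Fin n) ℝ) (z : Fin n) (u : Fin M → Fin n)
    (cols : Fin (M+1) → Fin n) (w : Fin (M+1) → Fin n) (q : Fin (M+1))
    (hq : w q = z) (huw : ∀ i, w (q.succAbove i) = u i) :
    (y.submatrix (Fin.cons z u) cols).det = (-1:ℝ)^(q:ℕ) * (y.submatrix w cols).det := by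
  have hfun : ∀ i, (Fin.cons z u : Fin (M+1) → Fin n) i = w (q.cycleRange⁻¹ i) := by
    intro i
    induction i using Fin.cases with
    | zero =>
      have h : q.cycleRange⁻¹ 0 = q := by
        rw [Equiv.Perm.inv_def, Equiv.symm_apply_eq, Fin.cycleRange_self]
      rw [h, hq, Fin.cons_zero]
    | succ i =>
      have h : q.cycleRange⁻¹ i.succ = q.succAbove i := by
        rw [Equiv.Perm.inv_def, Equiv.symm_apply_eq, Fin.cycleRange_succAbove]
      rw [h, huw, Fin.cons_succ]
  have heq : y.submatrix (Fin.cons z u) cols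
      = (y.submatrix w cols).submatrix (q.cycleRange⁻¹ : Equiv.Perm (Fin (M+1))) id := by
    ext i l; simp [Matrix.submatrix_apply, hfun i]
  rw [heq, Matrix.det_permute]
  congr 1
  simp [Fin.sign_cycleRange]

lemma step {n : ℕ} (y : Matrix (Fin n) (Fin n) ℝ) (m : ℕ)
    (r c : Fin (m+2) → Fin n) (hr : StrictMono r) (hc : StrictMono c)
    (hgap : (r 0 : ℕ) + (m + 2) ≤ (r (Fin.last (m+1)) : ℕ))
    (IH : ∀ (k' : ℕ) (r' c' : Fin k' → Fin n), StrictMono r' → StrictMono c' →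
      k' * (2*n+1) + sp r' + sp c' < (m+2) * (2*n+1) + sp r + sp c →
      0 < (y.submatrix r' c').det) :
    0 < (y.submatrix r c).det := by
  obtain ⟨i₀, hi₀⟩ := exists_gap hr (by omega)
  have hpn : (r i₀.castSucc : ℕ) + 1 < n := by have := (r i₀.succ).isLt; omega
  set p : Fin n := ⟨(r i₀.castSucc : ℕ) + 1, by omega⟩ with hp
  set a : Fin (m+3) := ⟨(i₀ : ℕ) + 1, by have := i₀.isLt; omega⟩ with ha
  set r' : Fin (m+3) → Fin n := a.insertNth p r with hr'def
  have hra : r' a = p := by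
    rw [hr'def]; exact Fin.insertNth_apply_same (α := fun _ => Fin n) a p r
  have hrs : ∀ j, r' (a.succAbove j) = r j := by
    intro j; rw [hr'def]; exact Fin.insertNth_apply_succAbove (α := fun _ => Fin n) a p r j
  have hav : (a : ℕ) = (i₀ : ℕ) + 1 := by rw [ha]
  have hvp : (p : ℕ) = (r i₀.castSucc : ℕ) + 1 := by rw [hp]
  have key : ∀ j : Fin (m+2),
      ((a.succAbove j : Fin (m+3)) : ℕ) = if (j:ℕ) < (i₀:ℕ)+1 then (j:ℕ) else (j:ℕ)+1 := by
    intro j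
    rcases lt_or_ge j.castSucc a with h | h
    · rw [Fin.succAbove_of_castSucc_lt _ _ h]
      rw [Fin.lt_def, hav] at h
      simp only [Fin.coe_castSucc] at h ⊢
      rw [if_pos h]
    · rw [Fin.succAbove_of_le_castSucc _ _ h]
      rw [Fin.le_def, hav] at h
      simp only [Fin.coe_castSucc] at h
      simp only [Fin.val_succ]
      rw [if_neg (by omega)]
  -- strict monotonicity of r'
  have hr' : StrictMono r' := by
    intro t t' htt'
    rw [Fin.lt_def]
    rcases eq_or_ne t a with rfl | hta
    · obtain ⟨j, rfl⟩ := Fin.exists_succAbove_eq (ne_of_gt htt')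
      rw [hra, hrs]
      have h2 : (a : ℕ) < ((a.succAbove j : Fin (m+3)) : ℕ) := htt'
      rw [key j, hav] at h2
      have hj : (i₀:ℕ) + 1 ≤ (j:ℕ) := by split at h2 <;> omega
      have h3 : (r i₀.succ : ℕ) ≤ (r j : ℕ) := by
        rcases eq_or_lt_of_le (show i₀.succ ≤ j from by
          rw [Fin.le_def]; simpa using hj) with he | hl
        · rw [he]
        · exact le_of_lt (hr hl)
      omega
    · obtain ⟨j, rfl⟩ := Fin.exists_succAbove_eq hta
      rcases eq_or_ne t' a with rfl | ht'a
      · rw [hrs, hra]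
        have h2 : ((a.succAbove j : Fin (m+3)) : ℕ) < (a : ℕ) := htt'
        rw [key j, hav] at h2
        have hj : (j:ℕ) ≤ (i₀:ℕ) := by split at h2 <;> omega
        have h3 : (r j : ℕ) ≤ (r i₀.castSucc : ℕ) := by
          rcases eq_or_lt_of_le (show j ≤ i₀.castSucc from by
            rw [Fin.le_def]; simpa using hj) with he | hl
          · rw [he]
          · exact le_of_lt (hr hl)
        omega
      · obtain ⟨j', rfl⟩ := Fin.exists_succAbove_eq ht'a
        rw [hrs, hrs]
        have h3 : ((a.succAbove j : Fin (m+3)) : ℕ) < ((a.succAbove j' : Fin (m+3)) : ℕ) := htt'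
        rw [key j, key j'] at h3
        have hjj : j < j' := by
          rw [Fin.lt_def]
          split at h3 <;> split at h3 <;> omega
        have := hr hjj
        rwa [Fin.lt_def] at this
  -- endpoint values
  have hr'0 : r' 0 = r 0 := by
    have h : (0 : Fin (m+3)) = a.succAbove 0 := by
      rw [Fin.succAbove_of_castSucc_lt _ _ (by rw [Fin.lt_def]; simp [ha])]
      rfl
    rw [h, hrs]
  have hr'last : r' (Fin.last (m+2)) = r (Fin.last (m+1)) := by
    have h : (Fin.last (m+2)) = a.succAbove (Fin.last (m+1)) := by
      rw [Fin.succAbove_of_le_castSucc _ _ (by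
        rw [Fin.le_def]; simp [ha]; have := i₀.isLt; omega)]
      exact (Fin.succ_last _).symm
    rw [h, hrs]
  -- the auxiliary tuples
  set g : Fin m → Fin (m+3) := fun i => ((i₀.succAbove i).succ.castSucc) with hg
  set u : Fin m → Fin n := fun i => r' (g i) with hu
  set vmid : Fin (m+1) → Fin n := fun i => r' (i.succ.castSucc) with hvmid
  have haeq : a = i₀.succ.castSucc := by
    apply Fin.ext; simp [ha]
  set D : Fin (m+3) → ℝ := fun t => (y.submatrix (fun i => r' (t.succAbove i)) c).det with hD
  set cols : Fin (m+1) → Fin n := fun l => c l.succ with hcols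
  set G : Fin (m+3) → Matrix (Fin (m+1)) (Fin (m+1)) ℝ :=
    fun t => y.submatrix (Fin.cons (r' t) u) cols with hG
  set f : Fin (m+3) → ℝ := fun t => (-1:ℝ)^(t:ℕ) * D t * (G t).det with hf
  -- the three-term identity
  have hsum : ∑ t : Fin (m+3), f t = 0 := by
    set B : Matrix (Fin (m+1)) (Fin (m+1)) ℝ := y.submatrix (Fin.cons (r' 0) u) cols with hB
    have hGt : ∀ t, G t = B.updateRow 0 (fun l => y (r' t) (cols l)) := by
      intro t; ext i l
      induction i using Fin.cases with
      | zero => simp [hG, hB, Matrix.updateRow_self]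
      | succ i => simp [hG, hB, Matrix.updateRow_ne (Fin.succ_ne_zero i)]
    have e1 : ∀ t : Fin (m+3), f t
        = (B.updateRow 0 (((-1:ℝ)^(t:ℕ) * D t) • fun l => y (r' t) (cols l))).det := by
      intro t
      rw [Matrix.det_updateRow_smul, ← hGt t, hf]
    calc ∑ t : Fin (m+3), f t
        = ∑ t : Fin (m+3),
            (B.updateRow 0 (((-1:ℝ)^(t:ℕ) * D t) • fun l => y (r' t) (cols l))).det :=
          Finset.sum_congr rfl (fun t _ => e1 t)
      _ = (B.updateRow 0
            (∑ t : Fin (m+3), ((-1:ℝ)^(t:ℕ) * D t) • fun l => y (r' t) (cols l))).det :=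
          (det_updateRow_sum' B 0 Finset.univ _).symm
      _ = 0 := by
          have hz : (∑ t : Fin (m+3), ((-1:ℝ)^(t:ℕ) * D t) • fun l => y (r' t) (cols l))
              = (fun _ => (0:ℝ)) := by
            funext l
            have hld := ld y r' c (l.succ)
            rw [Finset.sum_apply]
            simp only [Pi.smul_apply, smul_eq_mul, hcols, hD]
            rw [← hld]
          rw [hz]
          exact Matrix.det_eq_zero_of_row_eq_zero 0 (fun l => by simp)
  -- vanishing terms
  have hvan : ∀ t : Fin (m+3), t ≠ 0 → t ≠ a → t ≠ Fin.last (m+2) → (G t).det = 0 := by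
    intro t h0 hta hl
    have h1 : 1 ≤ (t:ℕ) := by
      have : (t:ℕ) ≠ 0 := fun h => h0 (Fin.ext h)
      omega
    have h2 : (t:ℕ) ≤ m+1 := by
      have h3 : (t:ℕ) ≠ m+2 := fun h => hl (Fin.ext (by simp [h]))
      have := t.isLt; omega
    set j : Fin (m+1) := ⟨(t:ℕ)-1, by omega⟩ with hj
    have hjt : t = j.succ.castSucc := Fin.ext (by simp [hj]; omega)
    have hji : j ≠ i₀ := by
      intro hh; apply hta; rw [hjt, hh, haeq]
    obtain ⟨i, hi⟩ := Fin.exists_succAbove_eq hji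
    apply Matrix.det_zero_of_row_eq
      (show (0:Fin (m+1)) ≠ i.succ from (Fin.succ_ne_zero i).symm)
    funext l
    simp only [hG, Matrix.submatrix_apply, Fin.cons_zero, Fin.cons_succ, hu]
    have hgi : g i = t := by
      rw [hg]; simp only; rw [hi, ← hjt]
    rw [hgi]
  -- index distinctness
  have h0a : (0 : Fin (m+3)) ≠ a := by
    intro hh; have h := congrArg Fin.val hh; rw [hav] at h; simp at h
  have h0l : (0 : Fin (m+3)) ≠ Fin.last (m+2) := by
    intro hh; have h := congrArg Fin.val hh; simp at h
  have hal : a ≠ Fin.last (m+2) := by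
    intro hh; have h := congrArg Fin.val hh
    rw [hav, Fin.val_last] at h; have := i₀.isLt; omega
  -- collapse the sum to three terms
  have hsplit : f 0 + f a + f (Fin.last (m+2)) = 0 := by
    have h1 : ∑ t ∈ ({0, a, Fin.last (m+2)} : Finset (Fin (m+3))), f t
        = ∑ t : Fin (m+3), f t := by
      apply Finset.sum_subset (Finset.subset_univ _)
      intro t _ ht
      simp only [Finset.mem_insert, Finset.mem_singleton] at ht
      push_neg at ht
      rw [hf]; simp only
      rw [hvan t ht.1 ht.2.1 ht.2.2, mul_zero]
    rw [hsum] at h1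
    rw [← h1, Finset.sum_insert (by simp [h0a, h0l]),
      Finset.sum_insert (by simp [hal]), Finset.sum_singleton]
    ring
  -- evaluate the three surviving dets
  set E0 : ℝ := (y.submatrix (Fin.cons (r' 0) u) cols).det with hE0def
  set Ea : ℝ := (y.submatrix vmid cols).det with hEadef
  set El : ℝ := (y.submatrix (Fin.snoc u (r' (Fin.last (m+2)))) cols).det with hEldef
  have hG0 : (G 0).det = E0 := rfl
  have hGa : (G a).det = (-1:ℝ)^(i₀:ℕ) * Ea := by
    apply det_cons y (r' a) u cols vmid i₀
    · show r' (i₀.succ.castSucc) = r' a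
      rw [← haeq]
    · intro i
      show r' ((i₀.succAbove i).succ.castSucc) = u i
      rfl
  have hGl : (G (Fin.last (m+2))).det = (-1:ℝ)^(m:ℕ) * El := by
    have h := det_cons y (r' (Fin.last (m+2))) u cols
      (Fin.snoc u (r' (Fin.last (m+2)))) (Fin.last m)
      (by simp) (by intro i; rw [Fin.succAbove_last]; simp)
    simpa using h
  -- the sign bookkeeping
  have hsq : ∀ j : ℕ, (-1:ℝ)^j * (-1:ℝ)^j = 1 := by
    intro j
    rw [← pow_add, show j + j = 2*j from by ring, pow_mul]
    norm_num
  have hfin : D 0 * E0 - D a * Ea + D (Fin.last (m+2)) * El = 0 := by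
    have hf0 : f 0 = D 0 * E0 := by
      simp only [hf, hG0, Fin.val_zero, pow_zero, one_mul]
    have hfa : f a = -(D a * Ea) := by
      simp only [hf, hGa, hav, pow_succ]
      linear_combination (-(D a * Ea)) * hsq (i₀:ℕ)
    have hfl : f (Fin.last (m+2)) = D (Fin.last (m+2)) * El := by
      simp only [hf, hGl, Fin.val_last]
      have h2 : ((-1:ℝ))^(m+2) = (-1:ℝ)^(m:ℕ) := by rw [pow_add]; norm_num
      rw [h2]
      linear_combination (D (Fin.last (m+2)) * El) * hsq m
    rw [hf0, hfa, hfl] at hsplit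
    linarith
  -- strict monotonicity of all tuples
  have hg_mono : StrictMono g :=
    Fin.strictMono_castSucc.comp (Fin.strictMono_succ.comp (Fin.strictMono_succAbove i₀))
  have hu_mono : StrictMono u := hr'.comp hg_mono
  have hvmid_mono : StrictMono vmid :=
    hr'.comp (Fin.strictMono_castSucc.comp Fin.strictMono_succ)
  have hcols_mono : StrictMono cols := hc.comp Fin.strictMono_succ
  have hgval : ∀ i, (g i : ℕ) = ((i₀.succAbove i) : ℕ) + 1 := fun i => rfl
  have hg_pos : ∀ i, (0:Fin (m+3)) < g i := by
    intro i; rw [Fin.lt_def, hgval i]; simp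
  have hcons0 : ∀ i, r' 0 < u i := fun i => hr' (hg_pos i)
  have hglast : ∀ i, g i < Fin.last (m+2) := by
    intro i; rw [Fin.lt_def, hgval i, Fin.val_last]
    have := (i₀.succAbove i).isLt; omega
  have hsnocz : ∀ i, u i < r' (Fin.last (m+2)) := fun i => hr' (hglast i)
  -- numeric facts for measures
  have hvr0 : (r' 0 : ℕ) = (r 0 : ℕ) := by rw [hr'0]
  have hvrl : (r' (Fin.last (m+2)) : ℕ) = (r (Fin.last (m+1)) : ℕ) := by rw [hr'last]
  have hmul : (m+2) * (2*n+1) = (m+1) * (2*n+1) + (2*n+1) := by ring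
  have hnpos : 0 < n := Fin.pos (r 0)
  -- positivity of the five minors
  have hD0 : 0 < D 0 := by
    show 0 < (y.submatrix (fun i => r' ((0 : Fin (m+3)).succAbove i)) c).det
    apply IH (m+2) (fun i => r' ((0 : Fin (m+3)).succAbove i)) c
      (hr'.comp (Fin.strictMono_succAbove 0) :
        StrictMono fun i => r' ((0 : Fin (m+3)).succAbove i)) hc
    simp only [sp_succ]
    have h1 : (r' ((0:Fin (m+3)).succAbove (Fin.last (m+1))) : ℕ)
        = (r (Fin.last (m+1)) : ℕ) := by
      rw [show (0:Fin (m+3)).succAbove (Fin.last (m+1)) = Fin.last (m+2) from by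
        rw [Fin.succAbove_zero]; exact Fin.succ_last _, hr'last]
    have h2 : (r 0 : ℕ) < (r' ((0:Fin (m+3)).succAbove 0) : ℕ) := by
      rw [← hvr0]
      exact hr' (by rw [Fin.lt_def, Fin.succAbove_zero]; simp)
    omega
  have hDl : 0 < D (Fin.last (m+2)) := by
    show 0 < (y.submatrix (fun i => r' ((Fin.last (m+2)).succAbove i)) c).det
    apply IH (m+2) (fun i => r' ((Fin.last (m+2)).succAbove i)) c
      (hr'.comp (Fin.strictMono_succAbove (Fin.last (m+2))) :
        StrictMono fun i => r' ((Fin.last (m+2)).succAbove i)) hc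
    simp only [sp_succ]
    have h1 : (r' ((Fin.last (m+2)).succAbove (Fin.last (m+1))) : ℕ)
        < (r (Fin.last (m+1)) : ℕ) := by
      rw [← hvrl]
      apply hr'
      rw [Fin.succAbove_last]
      exact Fin.castSucc_lt_last _
    have h2 : (r' ((Fin.last (m+2)).succAbove 0) : ℕ) = (r 0 : ℕ) := by
      rw [← hvr0]
      congr 1 <;> simp
    omega
  have hspb : ∀ (w : Fin (m+1) → Fin n), sp w < n := by
    intro w; rw [sp_succ]
    have := (w (Fin.last m)).isLt; omega
  have hmeasE : ∀ (w : Fin (m+1) → Fin n),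
      (m+1) * (2*n+1) + sp w + sp cols < (m+2) * (2*n+1) + sp r + sp c := by
    intro w
    have h1 := hspb w
    have h2 := hspb cols
    omega
  have hE0 : 0 < E0 := by
    rw [hE0def]
    exact IH (m+1) _ cols (strictMono_cons hu_mono hcons0) hcols_mono (hmeasE _)
  have hEa : 0 < Ea := by
    rw [hEadef]
    exact IH (m+1) _ cols hvmid_mono hcols_mono (hmeasE _)
  have hEl : 0 < El := by
    rw [hEldef]
    exact IH (m+1) _ cols (strictMono_snoc hu_mono hsnocz) hcols_mono (hmeasE _)
  -- conclude
  have htarget : D a = (y.submatrix r c).det := by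
    show (y.submatrix (fun i => r' (a.succAbove i)) c).det = (y.submatrix r c).det
    rw [show (fun i => r' (a.succAbove i)) = r from funext hrs]
  rw [← htarget]
  nlinarith [hfin, mul_pos hD0 hE0, mul_pos hDl hEl, hEa]

def Hsolid (n : ℕ) (y : Matrix (Fin n) (Fin n) ℝ) : Prop :=
  ∀ (k r0 c0 : ℕ) (_ : 1 ≤ k) (_ : r0 + k ≤ n) (_ : c0 + k ≤ n),
    0 < (y.submatrix
          (fun a : Fin k => (⟨r0 + a.val, lt_of_lt_of_le (Nat.add_lt_add_left a.isLt r0) ‹r0 + k ≤ n›⟩ : Fin n))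
          (fun a : Fin k => (⟨c0 + a.val, lt_of_lt_of_le (Nat.add_lt_add_left a.isLt c0) ‹c0 + k ≤ n›⟩ : Fin n))).det

lemma Hsolid.transpose {n : ℕ} {y : Matrix (Fin n) (Fin n) ℝ} (hs : Hsolid n y) :
    Hsolid n yᵀ := by
  intro k r0 c0 hk hr hc
  rw [← Matrix.transpose_submatrix, Matrix.det_transpose]
  exact hs k c0 r0 hk hc hr

lemma main {n : ℕ} : ∀ (N : ℕ) (y : Matrix (Fin n) (Fin n) ℝ), Hsolid n y → Hsolid n yᵀ →
    ∀ (k : ℕ) (r c : Fin k → Fin n), StrictMono r → StrictMono c →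
    k * (2*n+1) + sp r + sp c ≤ N → 0 < (y.submatrix r c).det := by
  intro N
  induction N with
  | zero =>
    intro y hs hst k r c hr hc hN
    match k, r, c with
    | 0, r, c => rw [Matrix.det_fin_zero]; norm_num
    | (k'+1), r, c =>
      exfalso
      have : 0 < (k'+1) * (2*n+1) := Nat.mul_pos (by omega) (by omega)
      omega
  | succ N ih =>
    intro y hs hst k r c hr hc hN
    match k, r, c with
    | 0, r, c => rw [Matrix.det_fin_zero]; norm_num
    | (k'+1), r, c =>
      have hbr : (r 0 : ℕ) + k' ≤ (r (Fin.last k') : ℕ) := by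
        have h := sm_nat hr 0 (Fin.last k') (by simp)
        simpa using h
      have hbc : (c 0 : ℕ) + k' ≤ (c (Fin.last k') : ℕ) := by
        have h := sm_nat hc 0 (Fin.last k') (by simp)
        simpa using h
      by_cases hgr : (r 0 : ℕ) + k' + 1 ≤ (r (Fin.last k') : ℕ)
      · -- row gap
        match k', r, c, hgr, hN with
        | 0, r, c, hgr, hN =>
          exfalso
          have : Fin.last 0 = (0 : Fin 1) := rfl
          rw [this] at hgr
          omega
        | (m+1), r, c, hgr, hN =>
          apply step y m r c hr hc (by omega)
          intro k'' r'' c'' hr'' hc'' hlt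
          have hx : (m+1+1) * (2*n+1) = (m+2) * (2*n+1) := by ring
          exact ih y hs hst k'' r'' c'' hr'' hc'' (by omega)
      · by_cases hgc : (c 0 : ℕ) + k' + 1 ≤ (c (Fin.last k') : ℕ)
        · -- column gap: transpose
          match k', r, c, hbr, hgr, hgc, hN with
          | 0, r, c, hbr, hgr, hgc, hN =>
            exfalso
            have : Fin.last 0 = (0 : Fin 1) := rfl
            rw [this] at hgc
            omega
          | (m+1), r, c, hbr, hgr, hgc, hN =>
            have hstep : 0 < (yᵀ.submatrix c r).det := by
              apply step yᵀ m c r hc hr (by omega)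
              intro k'' r'' c'' hr'' hc'' hlt
              have he : (yᵀ.submatrix r'' c'').det = (y.submatrix c'' r'').det := by
                rw [← Matrix.transpose_submatrix, Matrix.det_transpose]
              rw [he]
              have hx : (m+1+1) * (2*n+1) = (m+2) * (2*n+1) := by ring
              exact ih y hs hst k'' c'' r'' hc'' hr'' (by omega)
            have he : (yᵀ.submatrix c r).det = (y.submatrix r c).det := by
              rw [← Matrix.transpose_submatrix, Matrix.det_transpose]
            rwa [he] at hstep
        · -- solid
          push_neg at hgr hgc
          obtain ⟨r0, hr0⟩ : ∃ r0 : ℕ, (r 0 : ℕ) = r0 := ⟨_, rfl⟩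
          obtain ⟨c0, hc0⟩ : ∃ c0 : ℕ, (c 0 : ℕ) = c0 := ⟨_, rfl⟩
          have hrn : r0 + (k'+1) ≤ n := by
            have := (r (Fin.last k')).isLt; omega
          have hcn : c0 + (k'+1) ≤ n := by
            have := (c (Fin.last k')).isLt; omega
          have hre : r = fun i : Fin (k'+1) =>
              (⟨r0 + (i : ℕ), lt_of_lt_of_le (Nat.add_lt_add_left i.isLt r0) hrn⟩ : Fin n) := by
            funext i
            apply Fin.ext
            have h1 := sm_nat hr 0 i (by simp)
            have h2 := sm_nat hr i (Fin.last k') (by simp [Fin.le_def, Fin.is_le])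
            simp only [Fin.val_zero, Fin.val_last] at h1 h2 ⊢
            omega
          have hce : c = fun i : Fin (k'+1) =>
              (⟨c0 + (i : ℕ), lt_of_lt_of_le (Nat.add_lt_add_left i.isLt c0) hcn⟩ : Fin n) := by
            funext i
            apply Fin.ext
            have h1 := sm_nat hc 0 i (by simp)
            have h2 := sm_nat hc i (Fin.last k') (by simp [Fin.le_def, Fin.is_le])
            simp only [Fin.val_zero, Fin.val_last] at h1 h2 ⊢
            omega
          rw [hre, hce]
          exact hs (k'+1) r0 c0 (by omega) hrn hcn

end Fekete

/-- A square real matrix is totally positive if every minor is positive. -/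
def TotallyPositive {n : ℕ} (x : Matrix (Fin n) (Fin n) ℝ) : Prop :=
  ∀ (k : ℕ) (r c : Fin k → Fin n), StrictMono r → StrictMono c →
    0 < (x.submatrix r c).det

/-- Fekete's criterion: if all solid minors (those with consecutive row set and
consecutive column set) of a square matrix are positive, it is totally positive. -/
theorem stmt8 (n : ℕ) (x : Matrix (Fin n) (Fin n) ℝ)
    (hsolid : ∀ (k r0 c0 : ℕ), 1 ≤ k → ∀ (hr : r0 + k ≤ n) (hc : c0 + k ≤ n),
      0 < (x.submatrix
            (fun a : Fin k => (⟨r0 + a.val, by have := a.isLt; omega⟩ : Fin n))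
            (fun a : Fin k => (⟨c0 + a.val, by have := a.isLt; omega⟩ : Fin n))).det) :
    TotallyPositive x := by
  have hs : Fekete.Hsolid n x := fun k r0 c0 hk hr hc => hsolid k r0 c0 hk hr hc
  intro k r c hr hc
  exact Fekete.main (k * (2*n+1) + Fekete.sp r + Fekete.sp c) x hs hs.transpose
    k r c hr hc le_rfl
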